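/- Let W be a d×d matrix weight on ℝ such that ⟨W⟩_I is positive definite for every I ∈ 𝒟. With the disbalanced Haar functions g_I^{W,k} = w_I^k h_I e_I^k + h_I¹ A(W,I) e_I^k (where e_I^1, …, e_I^d is an orthonormal eigenbasis of ⟨W⟩_I, w_I^k = ‖⟨W⟩_I^{1/2} e_I^k‖^{-1}, and A(W,I) = (1/2)|I|^{1/2} ⟨W⟩_I^{-1} (⟨W⟩_{I₋} − ⟨W⟩_{I₊}) ⟨W⟩_I^{-1/2}), one has ‖g_I^{W,k}‖_{L²(W)} ≤ 5 for every I ∈ 𝒟 and 1 ≤ k ≤ d, where ‖u‖²_{L²(W)} = ∫_ℝ ⟨W(x)u(x), u(x)⟩_{ℂ^d} dx. Moreover the functions w_I^k h_I e_I^k are normalized: ‖w_I^k h_I e_I^k‖_{L²(W)} = 1. -/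

import Mathlib

open MeasureTheory Matrix Filter
open scoped ENNReal ComplexOrder

noncomputable section

abbrev Vec (d : ℕ) := Fin d → ℂ
abbrev Mat (d : ℕ) := Matrix (Fin d) (Fin d) ℂ

/-- The standard dyadic interval `[2^{-k} n, 2^{-k}(n+1))`. -/
def dyadI (k n : ℤ) : Set ℝ := Set.Ico ((2:ℝ) ^ (-k) * n) ((2:ℝ) ^ (-k) * (n + 1))

/-- The Haar function of the dyadic interval indexed by `(k, n)`. -/
def haar (k n : ℤ) (x : ℝ) : ℝ :=
  Real.sqrt ((2:ℝ) ^ k) *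
    ((dyadI (k+1) (2*n+1)).indicator (fun _ => (1:ℝ)) x -
      (dyadI (k+1) (2*n)).indicator (fun _ => (1:ℝ)) x)

/-- The non-cancellative Haar function `h_I^1 = 1_I / |I|`. -/
def hone (k n : ℤ) (x : ℝ) : ℝ := (dyadI k n).indicator (fun _ => (2:ℝ) ^ k) x

/-- Haar coefficient `f̂(I) = ∫ f · h_I`. -/
def fhat {d : ℕ} (f : ℝ → Vec d) (k n : ℤ) : Vec d :=
  ∫ x in dyadI k n, ((haar k n x : ℝ) : ℂ) • f x

/-- Average of a vector-valued function over a dyadic interval. -/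
def vavg {d : ℕ} (g : ℝ → Vec d) (k n : ℤ) : Vec d :=
  (2:ℝ) ^ k • ∫ x in dyadI k n, g x

/-- Average `⟨W⟩_I` of a matrix-valued function over a dyadic interval. -/
def avgD {d : ℕ} (W : ℝ → Mat d) (k n : ℤ) : Mat d :=
  Matrix.of fun i j => (2:ℝ) ^ k • ∫ x in dyadI k n, W x i j

/-- Average `⟨W⟩_{[a,b)}` of a matrix-valued function over an interval. -/
def avgI {d : ℕ} (W : ℝ → Mat d) (a b : ℝ) : Mat d :=
  Matrix.of fun i j => (b - a)⁻¹ • ∫ x in Set.Ico a b, W x i j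

/-- Inner product on `ℂ^d`, linear in the first entry. -/
def ip {d : ℕ} (u v : Vec d) : ℂ := ∑ i, u i * (starRingEnd ℂ) (v i)

/-- Squared Euclidean norm on `ℂ^d`. -/
def vnSq {d : ℕ} (u : Vec d) : ℝ := ∑ i, ‖u i‖ ^ 2

/-- Quadratic form `⟨A u, u⟩`. -/
def qf {d : ℕ} (A : Mat d) (u : Vec d) : ℝ := (ip (A.mulVec u) u).re

/-- Operator norm of a matrix acting on `ℂ^d`. -/
def mOpNorm {d : ℕ} (A : Mat d) : ℝ := ‖Matrix.toEuclideanCLM (𝕜 := ℂ) A‖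

/-- The positive semidefinite square root (junk value `0` if not psd). -/
def msqrt {d : ℕ} (A : Mat d) : Mat d :=
  @dite _ A.PosSemidef (Classical.dec _) (fun h => h.1.eigenvectorUnitary.1 *
    diagonal ((↑) ∘ (Real.sqrt ·) ∘ h.1.eigenvalues) * (star h.1.eigenvectorUnitary : Matrix (Fin d) (Fin d) ℂ)) (fun _ => 0)

/-- `‖f‖²_{L²(W)}`, valued in `[0,∞]`. -/
def wNormSq {d : ℕ} (W : ℝ → Mat d) (f : ℝ → Vec d) : ℝ≥0∞ :=
  ∫⁻ x, ENNReal.ofReal (qf (W x) (f x))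

/-- `‖f‖²_{L²(ℝ,ℂ^d)}`, valued in `[0,∞]`. -/
def l2NormSq {d : ℕ} (f : ℝ → Vec d) : ℝ≥0∞ :=
  ∫⁻ x, ENNReal.ofReal (vnSq (f x))

/-- The weighted square function sum `∑_{I ∈ 𝒟} ⟨⟨W⟩_I f̂(I), f̂(I)⟩`. -/
def sqSum {d : ℕ} (W : ℝ → Mat d) (f : ℝ → Vec d) : ℝ≥0∞ :=
  ∑' p : ℤ × ℤ, ENNReal.ofReal (qf (avgD W p.1 p.2) (fhat f p.1 p.2))

/-- `W` is a matrix weight: locally integrable entries, a.e. positive semidefinite values. -/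
def IsMatrixWeight {d : ℕ} (W : ℝ → Mat d) : Prop :=
  (∀ i j, LocallyIntegrable (fun x => W x i j) volume) ∧
  (∀ᵐ x ∂volume, (W x).PosSemidef)

/-- `K` bounds the `A₂` characteristic `sup_I ‖⟨W⟩_I^{1/2} ⟨W^{-1}⟩_I^{1/2}‖²` of `W`. -/
def A2Bound {d : ℕ} (W : ℝ → Mat d) (K : ℝ) : Prop :=
  ∀ a b : ℝ, a < b →
    mOpNorm (msqrt (avgI W a b) * msqrt (avgI (fun x => (W x)⁻¹) a b)) ^ 2 ≤ K

/-- `W` is a matrix `A₂` weight with `A₂` characteristic at most `K` (and `1 ≤ K`,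
as the characteristic is always at least `1`).  The positive definiteness of the
averages of `W` and `W⁻¹` is recorded as well. -/
def IsA2Weight {d : ℕ} (W : ℝ → Mat d) (K : ℝ) : Prop :=
  IsMatrixWeight W ∧ (∀ᵐ x ∂volume, IsUnit (W x).det) ∧
  IsMatrixWeight (fun x => (W x)⁻¹) ∧ 1 ≤ K ∧ A2Bound W K ∧
  (∀ a b : ℝ, a < b → (avgI W a b).PosDef) ∧
  (∀ a b : ℝ, a < b → (avgI (fun x => (W x)⁻¹) a b).PosDef) ∧
  (∀ k n : ℤ, (avgD W k n).PosDef) ∧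
  (∀ k n : ℤ, (avgD (fun x => (W x)⁻¹) k n).PosDef)


/-- The normalizing coefficient `w_I^k = ‖⟨W⟩_I^{1/2} e‖⁻¹`. -/
def wCoef {d : ℕ} (W : ℝ → Mat d) (k n : ℤ) (e : Vec d) : ℝ :=
  (Real.sqrt (vnSq ((msqrt (avgD W k n)).mulVec e)))⁻¹

/-- The matrix `A(W,I) = (1/2)|I|^{1/2} ⟨W⟩_I⁻¹ (⟨W⟩_{I₋} − ⟨W⟩_{I₊}) ⟨W⟩_I^{-1/2}`. -/
def AWI {d : ℕ} (W : ℝ → Mat d) (k n : ℤ) : Mat d :=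
  ((2:ℝ)⁻¹ * Real.sqrt ((2:ℝ) ^ (-k))) •
    ((avgD W k n)⁻¹ * (avgD W (k+1) (2*n) - avgD W (k+1) (2*n+1)) * (msqrt (avgD W k n))⁻¹)

/-- The disbalanced Haar function `g_I^{W,k} = w_I^k h_I e + h_I¹ A(W,I) e`. -/
def disHaar {d : ℕ} (W : ℝ → Mat d) (k n : ℤ) (e : Vec d) (x : ℝ) : Vec d :=
  (wCoef W k n e * haar k n x) • e + hone k n x • ((AWI W k n).mulVec e)

variable {d : ℕ}

lemma ip_conj (u v : Vec d) : ip u v = (starRingEnd ℂ) (ip v u) := by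
  simp [ip, map_sum, mul_comm]

lemma ip_re_conj (u v : Vec d) : (ip u v).re = (ip v u).re := by
  rw [ip_conj]; exact Complex.conj_re _

lemma ip_add_left (u v w : Vec d) : ip (u + v) w = ip u w + ip v w := by
  simp [ip, add_mul, Finset.sum_add_distrib]

lemma ip_add_right (u v w : Vec d) : ip u (v + w) = ip u v + ip u w := by
  simp [ip, mul_add, Finset.sum_add_distrib]

lemma ip_sub_left (u v w : Vec d) : ip (u - v) w = ip u w - ip v w := by
  simp [ip, sub_mul, Finset.sum_sub_distrib]

lemma ip_sub_right (u v w : Vec d) : ip u (v - w) = ip u v - ip u w := by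
  simp [ip, mul_sub, Finset.sum_sub_distrib]

lemma ip_smul_left (r : ℝ) (u v : Vec d) : ip (r • u) v = (r : ℂ) * ip u v := by
  simp [ip, Finset.mul_sum, Complex.real_smul, mul_assoc]

lemma ip_smul_right (r : ℝ) (u v : Vec d) : ip u (r • v) = (r : ℂ) * ip u v := by
  simp [ip, Finset.mul_sum, Complex.real_smul]
  ring_nf
  congr 1; ext i; ring

lemma ip_zero_left (v : Vec d) : ip 0 v = 0 := by simp [ip]

lemma vnSq_eq_ip (u : Vec d) : vnSq u = (ip u u).re := by
  simp [vnSq, ip, Complex.mul_conj', ← Complex.ofReal_pow, Complex.ofReal_re]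

lemma ip_mulVec (A : Mat d) (u v : Vec d) : ip (A.mulVec u) v = ip u (Aᴴ.mulVec v) := by
  simp only [ip, Matrix.mulVec, dotProduct, Matrix.conjTranspose_apply, map_sum,
    _root_.map_mul, Finset.sum_mul, Finset.mul_sum, Complex.star_def, Complex.conj_conj]
  rw [Finset.sum_comm]
  congr 1; ext i; congr 1; ext j
  ring

lemma qf_add_mat (A B : Mat d) (u : Vec d) : qf (A + B) u = qf A u + qf B u := by
  simp [qf, Matrix.add_mulVec, ip_add_left]

lemma qf_smul_mat (r : ℝ) (A : Mat d) (u : Vec d) : qf (r • A) u = r * qf A u := by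
  have : (r • A).mulVec u = r • A.mulVec u := by
    ext i; simp [Matrix.mulVec, dotProduct, Finset.mul_sum, Complex.real_smul, mul_assoc]
  simp [qf, this, ip_smul_left]

lemma mulVec_real_smul (A : Mat d) (r : ℝ) (u : Vec d) :
    A.mulVec (r • u) = r • A.mulVec u := by
  ext i
  simp [Matrix.mulVec, dotProduct, Finset.mul_sum, Complex.real_smul]
  congr 1; ext j; ring

lemma qf_smul_vec (r : ℝ) (A : Mat d) (u : Vec d) : qf A (r • u) = r ^ 2 * qf A u := by
  rw [qf, mulVec_real_smul, ip_smul_left, ip_smul_right, ← mul_assoc, ← Complex.ofReal_mul, Complex.re_ofReal_mul, qf]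
  ring

lemma qf_zero_vec (A : Mat d) : qf A 0 = 0 := by
  simp [qf, Matrix.mulVec_zero, ip_zero_left]

lemma qf_neg_vec (A : Mat d) (u : Vec d) : qf A (-u) = qf A u := by
  have := qf_smul_vec (-1) A u
  simpa using this

lemma qf_par (A : Mat d) (u v : Vec d) :
    qf A (u + v) + qf A (u - v) = 2 * qf A u + 2 * qf A v := by
  simp only [qf, Matrix.mulVec_add, Matrix.mulVec_sub, ip_add_left, ip_add_right,
    ip_sub_left, ip_sub_right]
  simp only [Complex.add_re, Complex.sub_re]
  have h1 := ip_re_conj (A.mulVec u) v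
  have h2 := ip_re_conj (A.mulVec v) u
  ring

lemma qf_le_par (A : Mat d) (u v : Vec d) (h : 0 ≤ qf A (u - v)) :
    qf A (u + v) ≤ 2 * qf A u + 2 * qf A v := by
  have := qf_par A u v; linarith

lemma qf_eq_dot (A : Mat d) (u : Vec d) : ip (A.mulVec u) u = dotProduct (star u) (A.mulVec u) := by
  simp [ip, dotProduct, mul_comm]

lemma qf_nonneg_of_psd {A : Mat d} (hA : A.PosSemidef) (u : Vec d) : 0 ≤ qf A u := by
  have h := hA.dotProduct_mulVec_nonneg u
  rw [qf, qf_eq_dot]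
  exact (Complex.le_def.mp h).1

lemma qf_pos_of_posdef {A : Mat d} (hA : A.PosDef) {u : Vec d} (hu : u ≠ 0) : 0 < qf A u := by
  have h := hA.dotProduct_mulVec_pos hu
  rw [qf, qf_eq_dot]
  exact (Complex.lt_def.mp h).1

lemma qf_add_vec (A : Mat d) (u v : Vec d) :
    qf A (u + v) = qf A u + qf A v + (ip (A.mulVec u) v).re + (ip (A.mulVec v) u).re := by
  simp only [qf, Matrix.mulVec_add, ip_add_left, ip_add_right, Complex.add_re]
  ring

lemma qf_cs {A : Mat d} (hA : Aᴴ = A) (h0 : ∀ u : Vec d, 0 ≤ qf A u) (x y : Vec d) :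
    (ip (A.mulVec x) y).re ≤ Real.sqrt (qf A x) * Real.sqrt (qf A y) := by
  set R := (ip (A.mulVec x) y).re with hR
  have hsymm : (ip (A.mulVec y) x).re = R := by
    have h1 : ip (A.mulVec y) x = (starRingEnd ℂ) (ip (A.mulVec x) y) := by
      rw [ip_mulVec A x y, hA, ip_conj]
    rw [hR, h1, Complex.conj_re]
  have hq : ∀ t : ℝ, 0 ≤ qf A x * t ^ 2 + 2 * R * t + qf A y := by
    intro t
    have h := h0 (t • x + y)
    have hexp : qf A (t • x + y) = qf A x * t ^ 2 + 2 * R * t + qf A y := by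
      rw [qf_add_vec, qf_smul_vec, mulVec_real_smul, ip_smul_left, ip_smul_right,
        Complex.re_ofReal_mul, Complex.re_ofReal_mul, hsymm]
      ring
    linarith [hexp ▸ h]
  rcases le_or_gt R 0 with hR0 | hR0
  · exact le_trans hR0 (mul_nonneg (Real.sqrt_nonneg _) (Real.sqrt_nonneg _))
  · have ha : 0 ≤ qf A x := h0 x
    rcases eq_or_lt_of_le ha with haz | hap
    · exfalso
      have := hq (-(qf A y + 1) / (2 * R))
      rw [← haz] at this
      have h2R : (2 * R) ≠ 0 := by positivity
      field_simp at this
      nlinarith [mul_pos hR0 hR0]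
    · have hd : R ^ 2 ≤ qf A x * qf A y := by
        have h1 := hq (-R / qf A x)
        have hax : qf A x ≠ 0 := ne_of_gt hap
        have h2 : qf A x * (-R / qf A x) ^ 2 + 2 * R * (-R / qf A x) + qf A y
            = qf A y - R ^ 2 / qf A x := by field_simp; ring
        rw [h2] at h1
        have h3 : R ^ 2 / qf A x ≤ qf A y := by linarith
        have h4 := (div_le_iff₀ hap).mp h3
        nlinarith [h4]
      calc R = Real.sqrt (R ^ 2) := by rw [Real.sqrt_sq hR0.le]
        _ ≤ Real.sqrt (qf A x * qf A y) := Real.sqrt_le_sqrt hd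
        _ = Real.sqrt (qf A x) * Real.sqrt (qf A y) := Real.sqrt_mul ha _

lemma smul_mat_mulVec (r : ℝ) (A : Mat d) (u : Vec d) :
    (r • A).mulVec u = r • A.mulVec u := by
  ext i
  simp only [Matrix.mulVec, dotProduct, Matrix.smul_apply, Pi.smul_apply,
    Complex.real_smul, Finset.mul_sum]
  congr 1; ext j; ring

lemma qf_cancel_left (M : Mat d) (h : M * M⁻¹ = 1) (z : Vec d) :
    qf M (M⁻¹.mulVec z) = qf M⁻¹ z := by
  rw [qf, Matrix.mulVec_mulVec, h, Matrix.one_mulVec, qf]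
  exact ip_re_conj _ _

lemma qf_cancel_right (M : Mat d) (h : M⁻¹ * M = 1) (w : Vec d) :
    qf M⁻¹ (M.mulVec w) = qf M w := by
  rw [qf, Matrix.mulVec_mulVec, h, Matrix.one_mulVec, qf]
  exact ip_re_conj _ _

lemma qf_expand (A : Mat d) (v : Vec d) :
    qf A v = ∑ i, ∑ i', (A i i' * (v i' * (starRingEnd ℂ) (v i))).re := by
  rw [qf, ip, Complex.re_sum]
  congr 1; ext i
  rw [Matrix.mulVec, dotProduct, Finset.sum_mul, Complex.re_sum]
  congr 1; ext i'
  ring_nf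

lemma two_zpow_pos (j : ℤ) : (0:ℝ) < (2:ℝ) ^ j := zpow_pos (by norm_num) j

lemma two_zpow_half (k : ℤ) (c : ℝ) :
    (2:ℝ) ^ (-(k+1)) * (2 * c) = (2:ℝ) ^ (-k) * c := by
  have h : (2:ℝ) ^ (-(k+1)) = (2:ℝ) ^ (-k) * 2⁻¹ := by
    rw [show -(k+1) = -k + (-1) by ring, zpow_add₀ (by norm_num : (2:ℝ) ≠ 0)]
    norm_num
  rw [h]; ring

lemma dyad_left (k n : ℤ) :
    dyadI (k+1) (2*n) = Set.Ico ((2:ℝ)^(-k) * (n:ℝ)) ((2:ℝ)^(-(k+1)) * ((2*n+1 : ℤ) : ℝ)) := by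
  have e1 : (2:ℝ)^(-(k+1)) * ((2*n : ℤ):ℝ) = (2:ℝ)^(-k) * (n:ℝ) := by
    push_cast
    rw [← two_zpow_half k (n:ℝ)]
  have e2 : ((2*n : ℤ):ℝ) + 1 = ((2*n+1 : ℤ):ℝ) := by push_cast; ring
  unfold dyadI
  rw [e2, e1]

lemma dyad_right (k n : ℤ) :
    dyadI (k+1) (2*n+1) = Set.Ico ((2:ℝ)^(-(k+1)) * ((2*n+1 : ℤ) : ℝ)) ((2:ℝ)^(-k) * ((n:ℝ)+1)) := by
  have e3 : (2:ℝ)^(-(k+1)) * (((2*n+1 : ℤ):ℝ) + 1) = (2:ℝ)^(-k) * ((n:ℝ)+1) := by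
    push_cast
    rw [← two_zpow_half k ((n:ℝ)+1)]
    ring
  unfold dyadI
  rw [e3]

lemma dyad_mid_lb (k n : ℤ) : (2:ℝ)^(-k) * (n:ℝ) ≤ (2:ℝ)^(-(k+1)) * ((2*n+1 : ℤ) : ℝ) := by
  rw [← two_zpow_half k (n:ℝ)]
  have := (two_zpow_pos (-(k+1))).le
  push_cast
  nlinarith [two_zpow_pos (-(k+1))]

lemma dyad_mid_ub (k n : ℤ) : (2:ℝ)^(-(k+1)) * ((2*n+1 : ℤ) : ℝ) ≤ (2:ℝ)^(-k) * ((n:ℝ)+1) := by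
  rw [← two_zpow_half k ((n:ℝ)+1)]
  push_cast
  nlinarith [two_zpow_pos (-(k+1))]

lemma split_union (k n : ℤ) :
    dyadI (k+1) (2*n) ∪ dyadI (k+1) (2*n+1) = dyadI k n := by
  rw [dyad_left, dyad_right]
  rw [Set.Ico_union_Ico_eq_Ico (dyad_mid_lb k n) (dyad_mid_ub k n)]
  rfl

lemma halves_disjoint (k n : ℤ) :
    Disjoint (dyadI (k+1) (2*n)) (dyadI (k+1) (2*n+1)) := by
  rw [dyad_left, dyad_right]
  exact Set.Ico_disjoint_Ico_same

lemma measurableSet_dyadI (k n : ℤ) : MeasurableSet (dyadI k n) :=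
  measurableSet_Ico

lemma mem_left_mem (k n : ℤ) {x : ℝ} (hx : x ∈ dyadI (k+1) (2*n)) : x ∈ dyadI k n := by
  rw [← split_union k n]; exact Or.inl hx

lemma mem_right_mem (k n : ℤ) {x : ℝ} (hx : x ∈ dyadI (k+1) (2*n+1)) : x ∈ dyadI k n := by
  rw [← split_union k n]; exact Or.inr hx

lemma haar_left {k n : ℤ} {x : ℝ} (hx : x ∈ dyadI (k+1) (2*n)) :
    haar k n x = -Real.sqrt ((2:ℝ)^k) := by
  have hx2 : x ∉ dyadI (k+1) (2*n+1) := Set.disjoint_left.mp (halves_disjoint k n) hx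
  unfold haar
  rw [Set.indicator_of_notMem hx2, Set.indicator_of_mem hx]
  ring

lemma haar_right {k n : ℤ} {x : ℝ} (hx : x ∈ dyadI (k+1) (2*n+1)) :
    haar k n x = Real.sqrt ((2:ℝ)^k) := by
  have hx2 : x ∉ dyadI (k+1) (2*n) := Set.disjoint_right.mp (halves_disjoint k n) hx
  unfold haar
  rw [Set.indicator_of_notMem hx2, Set.indicator_of_mem hx]
  ring

lemma haar_out {k n : ℤ} {x : ℝ} (hx : x ∉ dyadI k n) : haar k n x = 0 := by
  have h1 : x ∉ dyadI (k+1) (2*n) := fun h => hx (mem_left_mem k n h)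
  have h2 : x ∉ dyadI (k+1) (2*n+1) := fun h => hx (mem_right_mem k n h)
  unfold haar
  rw [Set.indicator_of_notMem h1, Set.indicator_of_notMem h2]
  ring

lemma hone_mem {k n : ℤ} {x : ℝ} (hx : x ∈ dyadI k n) : hone k n x = (2:ℝ)^k :=
  Set.indicator_of_mem hx _

lemma hone_out {k n : ℤ} {x : ℝ} (hx : x ∉ dyadI k n) : hone k n x = 0 :=
  Set.indicator_of_notMem hx _

lemma intOn_entry {W : ℝ → Mat d} (hW : IsMatrixWeight W) (j m : ℤ) (i i' : Fin d) :
    IntegrableOn (fun x => W x i i') (dyadI j m) := by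
  have h := (hW.1 i i').integrableOn_isCompact
    (isCompact_Icc (a := (2:ℝ)^(-j) * (m:ℝ)) (b := (2:ℝ)^(-j) * ((m:ℝ)+1)))
  exact h.mono_set (Set.Ico_subset_Icc_self)

lemma intOn_qf {W : ℝ → Mat d} (hW : IsMatrixWeight W) (j m : ℤ) (v : Vec d) :
    IntegrableOn (fun x => qf (W x) v) (dyadI j m) := by
  have hrw : (fun x => qf (W x) v)
      = fun x => ∑ i, ∑ i', ((W x i i') * (v i' * (starRingEnd ℂ) (v i))).re := by
    funext x; exact qf_expand (W x) v
  rw [hrw]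
  apply integrable_finset_sum
  intro i _
  apply integrable_finset_sum
  intro i' _
  exact ((intOn_entry hW j m i i').mul_const _).re

lemma setIntegral_qf {W : ℝ → Mat d} (hW : IsMatrixWeight W) (j m : ℤ) (v : Vec d) :
    ∫ x in dyadI j m, qf (W x) v
      = qf (Matrix.of fun i i' => ∫ x in dyadI j m, W x i i') v := by
  rw [qf_expand (Matrix.of fun i i' => ∫ x in dyadI j m, W x i i') v]
  have hrw : ∀ x, qf (W x) v
      = ∑ i, ∑ i', ((W x i i') * (v i' * (starRingEnd ℂ) (v i))).re :=
    fun x => qf_expand (W x) v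
  rw [integral_congr_ae (Filter.Eventually.of_forall hrw)]
  rw [integral_finset_sum]
  · refine Finset.sum_congr rfl fun i _ => ?_
    rw [integral_finset_sum]
    · refine Finset.sum_congr rfl fun i' _ => ?_
      have hint : IntegrableOn (fun x => W x i i' * (v i' * (starRingEnd ℂ) (v i)))
          (dyadI j m) := (intOn_entry hW j m i i').mul_const _
      have h1 : ∫ x in dyadI j m, (W x i i' * (v i' * (starRingEnd ℂ) (v i))).re
          = (∫ x in dyadI j m, W x i i' * (v i' * (starRingEnd ℂ) (v i))).re := by
        simpa using integral_re hint
      rw [h1]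
      congr 1
      have : (fun x => W x i i' * (v i' * (starRingEnd ℂ) (v i)))
          = fun x => W x i i' • (v i' * (starRingEnd ℂ) (v i)) := by
        funext x; simp [smul_eq_mul]
      rw [this, integral_smul_const, smul_eq_mul, Matrix.of_apply]
    · intro i' _
      exact ((intOn_entry hW j m i i').mul_const _).re
  · intro i _
    apply integrable_finset_sum
    intro i' _
    exact ((intOn_entry hW j m i i').mul_const _).re

lemma qf_avgD {W : ℝ → Mat d} (hW : IsMatrixWeight W) (j m : ℤ) (v : Vec d) :
    qf (avgD W j m) v = (2:ℝ)^j * ∫ x in dyadI j m, qf (W x) v := by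
  have h : avgD W j m = ((2:ℝ)^j) • (Matrix.of fun i i' => ∫ x in dyadI j m, W x i i') := by
    ext i i'
    simp [avgD, Matrix.smul_apply]
  rw [h, qf_smul_mat, setIntegral_qf hW]

lemma setIntegral_qf_eq {W : ℝ → Mat d} (hW : IsMatrixWeight W) (j m : ℤ) (v : Vec d) :
    ∫ x in dyadI j m, qf (W x) v = (2:ℝ)^(-j) * qf (avgD W j m) v := by
  rw [qf_avgD hW, ← mul_assoc, _root_.zpow_neg, inv_mul_cancel₀ (two_zpow_pos j).ne', one_mul]

lemma qf_avgD_nonneg {W : ℝ → Mat d} (hW : IsMatrixWeight W) (j m : ℤ) (v : Vec d) :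
    0 ≤ qf (avgD W j m) v := by
  rw [qf_avgD hW]
  refine mul_nonneg (two_zpow_pos j).le (integral_nonneg_of_ae ?_)
  exact ae_restrict_of_ae (hW.2.mono fun x hx => qf_nonneg_of_psd hx v)

lemma avgD_herm {W : ℝ → Mat d} (hW : IsMatrixWeight W) (j m : ℤ) :
    (avgD W j m)ᴴ = avgD W j m := by
  ext i i'
  simp only [Matrix.conjTranspose_apply, avgD, Matrix.of_apply]
  rw [star_smul, star_trivial]
  congr 1
  have h1 : star (∫ x in dyadI j m, W x i' i) = ∫ x in dyadI j m, (starRingEnd ℂ) (W x i' i) :=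
    (integral_conj (f := fun x => W x i' i)).symm
  rw [h1]
  refine integral_congr_ae (ae_restrict_of_ae (hW.2.mono fun x hx => ?_))
  have h2 := congrFun (congrFun hx.1 i) i'
  rw [Matrix.conjTranspose_apply] at h2
  exact h2

lemma avgD_add_halves {W : ℝ → Mat d} (hW : IsMatrixWeight W) (k n : ℤ) :
    avgD W (k+1) (2*n) + avgD W (k+1) (2*n+1) = (2:ℝ) • avgD W k n := by
  ext i i'
  simp only [Matrix.add_apply, avgD, Matrix.of_apply, Matrix.smul_apply]
  have hsplit : ∫ x in dyadI k n, W x i i'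
      = (∫ x in dyadI (k+1) (2*n), W x i i') + ∫ x in dyadI (k+1) (2*n+1), W x i i' := by
    rw [← split_union k n,
      setIntegral_union (halves_disjoint k n) (measurableSet_dyadI (k+1) (2*n+1))
        (intOn_entry hW (k+1) (2*n) i i') (intOn_entry hW (k+1) (2*n+1) i i')]
  rw [hsplit, smul_smul]
  have h2 : (2:ℝ) * (2:ℝ)^k = (2:ℝ)^(k+1) := by
    rw [zpow_add₀ (by norm_num : (2:ℝ) ≠ 0), zpow_one]; ring
  rw [h2, smul_add]

lemma integral_two_piece {W : ℝ → Mat d} (hW : IsMatrixWeight W) (k n : ℤ) (v₁ v₂ : Vec d)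
    (g : ℝ → Vec d)
    (h₁ : ∀ x ∈ dyadI (k+1) (2*n), g x = v₁)
    (h₂ : ∀ x ∈ dyadI (k+1) (2*n+1), g x = v₂)
    (h0 : ∀ x, x ∉ dyadI k n → g x = 0) :
    ∫ x, qf (W x) (g x)
      = (2:ℝ)^(-(k+1)) * qf (avgD W (k+1) (2*n)) v₁
        + (2:ℝ)^(-(k+1)) * qf (avgD W (k+1) (2*n+1)) v₂ := by
  have hfun : (fun x => qf (W x) (g x))
      = fun x => (dyadI (k+1) (2*n)).indicator (fun x => qf (W x) v₁) x
          + (dyadI (k+1) (2*n+1)).indicator (fun x => qf (W x) v₂) x := by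
    funext x
    by_cases hx1 : x ∈ dyadI (k+1) (2*n)
    · have hx2 : x ∉ dyadI (k+1) (2*n+1) := Set.disjoint_left.mp (halves_disjoint k n) hx1
      rw [Set.indicator_of_mem hx1, Set.indicator_of_notMem hx2, h₁ x hx1, add_zero]
    · by_cases hx2 : x ∈ dyadI (k+1) (2*n+1)
      · rw [Set.indicator_of_notMem hx1, Set.indicator_of_mem hx2, h₂ x hx2, zero_add]
      · have hxI : x ∉ dyadI k n := by
          rw [← split_union k n]
          simp [hx1, hx2]
        rw [Set.indicator_of_notMem hx1, Set.indicator_of_notMem hx2, h0 x hxI,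
          qf_zero_vec, add_zero]
  rw [hfun, integral_add
      ((integrable_indicator_iff (measurableSet_dyadI (k+1) (2*n))).mpr (intOn_qf hW _ _ v₁))
      ((integrable_indicator_iff (measurableSet_dyadI (k+1) (2*n+1))).mpr (intOn_qf hW _ _ v₂)),
    integral_indicator (measurableSet_dyadI (k+1) (2*n)),
    integral_indicator (measurableSet_dyadI (k+1) (2*n+1)),
    setIntegral_qf_eq hW, setIntegral_qf_eq hW]

lemma T_bound {M Mm Mp S : Mat d}
    (hS2 : S * S = M) (hSH : Sᴴ = S)
    (hMMi : M * M⁻¹ = 1) (hMiM : M⁻¹ * M = 1) (hSSi : S * S⁻¹ = 1)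
    (hNpsd : M⁻¹.PosSemidef)
    (hMmH : Mmᴴ = Mm)
    (hMmnn : ∀ u : Vec d, 0 ≤ qf Mm u) (hMpnn : ∀ u : Vec d, 0 ≤ qf Mp u)
    (hsum : Mm + Mp = (2:ℝ) • M)
    (e : Vec d) (he : vnSq e = 1) (k : ℤ) :
    (2:ℝ)^k * qf M ((((2:ℝ)⁻¹ * Real.sqrt ((2:ℝ)^(-k))) •
        (M⁻¹ * (Mm - Mp) * S⁻¹)).mulVec e) ≤ 10 := by
  set w := S⁻¹.mulVec e with hw
  have hSw : S.mulVec w = e := by rw [hw, Matrix.mulVec_mulVec, hSSi, Matrix.one_mulVec]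
  have hqfMw : qf M w = 1 := by
    rw [qf, ← hS2, ← Matrix.mulVec_mulVec, hSw, ip_mulVec, hSH, hSw, ← vnSq_eq_ip, he]
  have hN_Mw : qf M⁻¹ (M.mulVec w) = 1 := by rw [qf_cancel_right M hMiM, hqfMw]
  have hqfle : ∀ u : Vec d, qf Mm u ≤ 2 * qf M u := by
    intro u
    have h1 : qf Mm u + qf Mp u = 2 * qf M u := by rw [← qf_add_mat, hsum, qf_smul_mat]
    have := hMpnn u; linarith
  set p := Mm.mulVec w with hp
  set v := (M⁻¹).mulVec p with hv
  have hMv : M.mulVec v = p := by rw [hv, Matrix.mulVec_mulVec, hMMi, Matrix.one_mulVec]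
  have hX2 : qf M v = qf M⁻¹ p := by
    rw [qf, hMv, qf, ← hv]
    exact ip_re_conj p v
  have hXnn : 0 ≤ qf M⁻¹ p := qf_nonneg_of_psd hNpsd p
  have hX1 : qf M⁻¹ p = (ip (Mm.mulVec w) v).re := by
    have e1 : (ip (Mm.mulVec w) v).re = (ip v (Mm.mulVec w)).re := ip_re_conj _ _
    rw [e1, ← hp, qf, ← hv]
  have hb1 : qf Mm w ≤ 2 := by have := hqfle w; rw [hqfMw] at this; linarith
  have hb2 : qf Mm v ≤ 2 * qf M⁻¹ p := by have := hqfle v; rw [hX2] at this; exact this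
  have hsqrt4 : Real.sqrt 4 = 2 := by
    rw [show (4:ℝ) = 2^2 by norm_num, Real.sqrt_sq (by norm_num : (0:ℝ) ≤ 2)]
  have hXle : qf M⁻¹ p ≤ 2 * Real.sqrt (qf M⁻¹ p) := by
    calc qf M⁻¹ p = (ip (Mm.mulVec w) v).re := hX1
      _ ≤ Real.sqrt (qf Mm w) * Real.sqrt (qf Mm v) := qf_cs hMmH hMmnn w v
      _ ≤ Real.sqrt 2 * Real.sqrt (2 * qf M⁻¹ p) := by
          exact mul_le_mul (Real.sqrt_le_sqrt hb1) (Real.sqrt_le_sqrt hb2)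
            (Real.sqrt_nonneg _) (Real.sqrt_nonneg _)
      _ = Real.sqrt (4 * qf M⁻¹ p) := by
          rw [← Real.sqrt_mul (by norm_num : (0:ℝ) ≤ 2)]
          ring_nf
      _ = 2 * Real.sqrt (qf M⁻¹ p) := by
          rw [Real.sqrt_mul (by norm_num : (0:ℝ) ≤ 4), hsqrt4]
  have hX4 : qf M⁻¹ p ≤ 4 := by
    nlinarith [Real.sq_sqrt hXnn, Real.sqrt_nonneg (qf M⁻¹ p), hXle]
  have hMp_eq : Mp = (2:ℝ) • M - Mm := by rw [← hsum]; abel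
  have hz : (Mm - Mp).mulVec w = (2:ℝ) • (p - M.mulVec w) := by
    rw [hMp_eq, hp]
    have h1 : Mm - ((2:ℝ) • M - Mm) = (2:ℝ) • Mm - (2:ℝ) • M := by module
    rw [h1, Matrix.sub_mulVec, smul_mat_mulVec, smul_mat_mulVec, ← smul_sub]
  have hqfz : qf M⁻¹ ((Mm - Mp).mulVec w) ≤ 40 := by
    rw [hz, qf_smul_vec]
    have hpar : qf M⁻¹ (p - M.mulVec w) ≤ 2 * qf M⁻¹ p + 2 * qf M⁻¹ (M.mulVec w) := by
      have h1 := qf_le_par M⁻¹ p (-(M.mulVec w)) (qf_nonneg_of_psd hNpsd _)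
      rw [qf_neg_vec, ← sub_eq_add_neg] at h1
      exact h1
    rw [hN_Mw] at hpar
    nlinarith [hpar, hX4, hXnn]
  have hAe : (((2:ℝ)⁻¹ * Real.sqrt ((2:ℝ)^(-k))) • (M⁻¹ * (Mm - Mp) * S⁻¹)).mulVec e
      = ((2:ℝ)⁻¹ * Real.sqrt ((2:ℝ)^(-k))) • ((M⁻¹).mulVec ((Mm - Mp).mulVec w)) := by
    rw [smul_mat_mulVec]
    congr 1
    rw [← Matrix.mulVec_mulVec, ← Matrix.mulVec_mulVec, ← hw]
  rw [hAe, qf_smul_vec, qf_cancel_left M hMMi]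
  have hr2 : ((2:ℝ)⁻¹ * Real.sqrt ((2:ℝ)^(-k)))^2 = 4⁻¹ * (2:ℝ)^(-k) := by
    rw [mul_pow, Real.sq_sqrt (two_zpow_pos (-k)).le]
    norm_num
  rw [hr2]
  have hzz : (2:ℝ)^k * (2:ℝ)^(-k) = 1 := by
    rw [← zpow_add₀ (by norm_num : (2:ℝ) ≠ 0)]
    simp
  calc (2:ℝ)^k * (4⁻¹ * (2:ℝ)^(-k) * qf M⁻¹ ((Mm - Mp).mulVec w))
      = ((2:ℝ)^k * (2:ℝ)^(-k)) * (4⁻¹ * qf M⁻¹ ((Mm - Mp).mulVec w)) := by ring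
    _ = 4⁻¹ * qf M⁻¹ ((Mm - Mp).mulVec w) := by rw [hzz, one_mul]
    _ ≤ 4⁻¹ * 40 := by linarith [hqfz]
    _ = 10 := by norm_num

/-- **Norm bounds for disbalanced Haar functions**: `‖g_I^{W,k}‖_{L²(W)} ≤ 5`, and
the functions `w_I^k h_I e_I^k` are normalized in `L²(W)`. -/
theorem disbalanced_haar_norm (d : ℕ) (W : ℝ → Mat d)
    (hW : IsMatrixWeight W) (hpos : ∀ k n : ℤ, (avgD W k n).PosDef)
    (k n : ℤ) (e : Vec d) (he : vnSq e = 1)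
    (heig : ∃ μ : ℝ, (avgD W k n).mulVec e = ((μ : ℂ) • e : Vec d)) :
    Real.sqrt (∫ x, qf (W x) (disHaar W k n e x)) ≤ 5 ∧
    ∫ x, qf (W x) (((wCoef W k n e * haar k n x) • e : Vec d)) = 1 := by
  clear heig
  have hM : (avgD W k n).PosDef := hpos k n
  have hpsd : (avgD W k n).PosSemidef := hM.posSemidef
  have hmsqrt : msqrt (avgD W k n) = hpsd.1.eigenvectorUnitary.1 *
      diagonal ((↑) ∘ (Real.sqrt ·) ∘ hpsd.1.eigenvalues) *
        (star hpsd.1.eigenvectorUnitary : Matrix (Fin d) (Fin d) ℂ) := dif_pos hpsd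
  have hU : (star hpsd.1.eigenvectorUnitary : Matrix (Fin d) (Fin d) ℂ) *
      hpsd.1.eigenvectorUnitary.1 = 1 := Matrix.mem_unitaryGroup_iff'.mp hpsd.1.eigenvectorUnitary.2
  have hD : diagonal (((↑) ∘ (Real.sqrt ·) ∘ hpsd.1.eigenvalues : Fin d → ℂ)) *
      diagonal (((↑) ∘ (Real.sqrt ·) ∘ hpsd.1.eigenvalues : Fin d → ℂ))
      = diagonal (RCLike.ofReal ∘ hpsd.1.eigenvalues) := by
    rw [diagonal_mul_diagonal]
    congr 1; funext i
    simp only [Function.comp]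
    rw [← Complex.ofReal_mul, Real.mul_self_sqrt (hpsd.eigenvalues_nonneg i)]
    rfl
  have hS2 : msqrt (avgD W k n) * msqrt (avgD W k n) = avgD W k n := by
    rw [hmsqrt]
    conv_rhs => rw [hpsd.1.spectral_theorem, Unitary.conjStarAlgAut_apply]
    rw [← hD]
    simp only [mul_assoc]
    rw [← mul_assoc (star _ : Matrix (Fin d) (Fin d) ℂ) _ _, hU, one_mul]
  have hSpsd : (msqrt (avgD W k n)).PosSemidef := by
    rw [hmsqrt, Matrix.star_eq_conjTranspose]
    refine Matrix.PosSemidef.mul_mul_conjTranspose_same ?_ _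
    refine Matrix.PosSemidef.diagonal fun i => ?_
    simp only [Function.comp, Pi.zero_apply]
    exact_mod_cast Real.sqrt_nonneg _
  have hSH : (msqrt (avgD W k n))ᴴ = msqrt (avgD W k n) := hSpsd.1
  have hMdet : (avgD W k n).det ≠ 0 := hM.det_pos.ne'
  have hSdet : (msqrt (avgD W k n)).det ≠ 0 := by
    intro h0
    apply hMdet
    rw [← hS2, Matrix.det_mul, h0, mul_zero]
  have hMMi : avgD W k n * (avgD W k n)⁻¹ = 1 :=
    Matrix.mul_nonsing_inv _ (isUnit_iff_ne_zero.mpr hMdet)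
  have hMiM : (avgD W k n)⁻¹ * avgD W k n = 1 :=
    Matrix.nonsing_inv_mul _ (isUnit_iff_ne_zero.mpr hMdet)
  have hSSi : msqrt (avgD W k n) * (msqrt (avgD W k n))⁻¹ = 1 :=
    Matrix.mul_nonsing_inv _ (isUnit_iff_ne_zero.mpr hSdet)
  have hNpsd : ((avgD W k n)⁻¹).PosSemidef := hM.inv.posSemidef
  have he0 : e ≠ 0 := by
    intro h
    rw [h] at he
    simp [vnSq] at he
  have hA : 0 < qf (avgD W k n) e := qf_pos_of_posdef hM he0
  have hvn : vnSq ((msqrt (avgD W k n)).mulVec e) = qf (avgD W k n) e := by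
    rw [vnSq_eq_ip, ip_mulVec, hSH, Matrix.mulVec_mulVec, hS2, qf]
    exact ip_re_conj _ _
  have hc2 : wCoef W k n e ^ 2 * qf (avgD W k n) e = 1 := by
    rw [wCoef, hvn, inv_pow, Real.sq_sqrt hA.le]
    exact inv_mul_cancel₀ hA.ne'
  have hs2 : Real.sqrt ((2:ℝ)^k) ^ 2 = (2:ℝ)^k := Real.sq_sqrt (two_zpow_pos k).le
  have h2t : (2:ℝ)^(-(k+1)) * ((2:ℝ)^k * 2) = 1 := by
    rw [show (2:ℝ)^k * 2 = (2:ℝ)^(k+1) by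
        rw [zpow_add₀ (by norm_num : (2:ℝ) ≠ 0), zpow_one],
      _root_.zpow_neg, inv_mul_cancel₀ (two_zpow_pos (k+1)).ne']
  have hpm : qf (avgD W (k+1) (2*n)) e + qf (avgD W (k+1) (2*n+1)) e
      = 2 * qf (avgD W k n) e := by
    rw [← qf_add_mat, avgD_add_halves hW k n, qf_smul_mat]
  -- Part 2
  have hpart2 : ∫ x, qf (W x) (((wCoef W k n e * haar k n x) • e : Vec d)) = 1 := by
    have hkey : ∫ x, qf (W x) (((wCoef W k n e * haar k n x) • e : Vec d))
        = (2:ℝ)^(-(k+1)) * qf (avgD W (k+1) (2*n))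
            ((wCoef W k n e * -Real.sqrt ((2:ℝ)^k)) • e)
          + (2:ℝ)^(-(k+1)) * qf (avgD W (k+1) (2*n+1))
            ((wCoef W k n e * Real.sqrt ((2:ℝ)^k)) • e) :=
      integral_two_piece hW k n _ _ (fun x => (wCoef W k n e * haar k n x) • e)
        (fun x hx => by simp only [haar_left hx])
        (fun x hx => by simp only [haar_right hx])
        (fun x hx => by simp only [haar_out hx, mul_zero, zero_smul])
    rw [hkey, qf_smul_vec, qf_smul_vec]
    have h1 : (wCoef W k n e * -Real.sqrt ((2:ℝ)^k))^2
        = wCoef W k n e ^ 2 * Real.sqrt ((2:ℝ)^k) ^ 2 := by ring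
    have h2 : (wCoef W k n e * Real.sqrt ((2:ℝ)^k))^2
        = wCoef W k n e ^ 2 * Real.sqrt ((2:ℝ)^k) ^ 2 := by ring
    rw [h1, h2, hs2]
    calc (2:ℝ)^(-(k+1)) * (wCoef W k n e ^ 2 * (2:ℝ)^k * qf (avgD W (k+1) (2*n)) e)
          + (2:ℝ)^(-(k+1)) * (wCoef W k n e ^ 2 * (2:ℝ)^k * qf (avgD W (k+1) (2*n+1)) e)
        = ((2:ℝ)^(-(k+1)) * ((2:ℝ)^k * 2)) * (wCoef W k n e ^ 2 *
            ((qf (avgD W (k+1) (2*n)) e + qf (avgD W (k+1) (2*n+1)) e) / 2)) := by ring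
      _ = ((2:ℝ)^(-(k+1)) * ((2:ℝ)^k * 2)) * (wCoef W k n e ^ 2 * qf (avgD W k n) e) := by
          rw [hpm]; ring
      _ = 1 := by rw [h2t, hc2, one_mul]
  refine ⟨?_, hpart2⟩
  -- Part 1
  have hT : (2:ℝ)^k * qf (avgD W k n) ((AWI W k n).mulVec e) ≤ 10 := by
    have h := T_bound hS2 hSH hMMi hMiM hSSi hNpsd
      (avgD_herm hW (k+1) (2*n)) (qf_avgD_nonneg hW (k+1) (2*n)) (qf_avgD_nonneg hW (k+1) (2*n+1))
      (avgD_add_halves hW k n) e he k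
    have hfold : (((2:ℝ)⁻¹ * Real.sqrt ((2:ℝ)^(-k))) •
        ((avgD W k n)⁻¹ * (avgD W (k+1) (2*n) - avgD W (k+1) (2*n+1)) *
          (msqrt (avgD W k n))⁻¹)) = AWI W k n := rfl
    rw [hfold] at h
    exact h
  have hq0 : 0 ≤ qf (avgD W k n) ((AWI W k n).mulVec e) := qf_nonneg_of_psd hpsd _
  have hpmA : qf (avgD W (k+1) (2*n)) ((AWI W k n).mulVec e)
      + qf (avgD W (k+1) (2*n+1)) ((AWI W k n).mulVec e)
      = 2 * qf (avgD W k n) ((AWI W k n).mulVec e) := by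
    rw [← qf_add_mat, avgD_add_halves hW k n, qf_smul_mat]
  have hkey : ∫ x, qf (W x) (disHaar W k n e x)
      = (2:ℝ)^(-(k+1)) * qf (avgD W (k+1) (2*n))
          ((wCoef W k n e * -Real.sqrt ((2:ℝ)^k)) • e + ((2:ℝ)^k) • (AWI W k n).mulVec e)
        + (2:ℝ)^(-(k+1)) * qf (avgD W (k+1) (2*n+1))
          ((wCoef W k n e * Real.sqrt ((2:ℝ)^k)) • e + ((2:ℝ)^k) • (AWI W k n).mulVec e) :=
    integral_two_piece hW k n _ _ (disHaar W k n e)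
      (fun x hx => by rw [disHaar, haar_left hx, hone_mem (mem_left_mem k n hx)])
      (fun x hx => by rw [disHaar, haar_right hx, hone_mem (mem_right_mem k n hx)])
      (fun x hx => by
        rw [disHaar, haar_out hx, hone_out hx, mul_zero, zero_smul, zero_smul, add_zero])
  have hbm : qf (avgD W (k+1) (2*n))
      ((wCoef W k n e * -Real.sqrt ((2:ℝ)^k)) • e + ((2:ℝ)^k) • (AWI W k n).mulVec e)
      ≤ 2 * ((wCoef W k n e * -Real.sqrt ((2:ℝ)^k))^2 * qf (avgD W (k+1) (2*n)) e)
        + 2 * (((2:ℝ)^k)^2 * qf (avgD W (k+1) (2*n)) ((AWI W k n).mulVec e)) := by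
    have h := qf_le_par (avgD W (k+1) (2*n)) ((wCoef W k n e * -Real.sqrt ((2:ℝ)^k)) • e)
      (((2:ℝ)^k) • (AWI W k n).mulVec e) (qf_avgD_nonneg hW (k+1) (2*n) _)
    rw [qf_smul_vec, qf_smul_vec] at h
    exact h
  have hbp : qf (avgD W (k+1) (2*n+1))
      ((wCoef W k n e * Real.sqrt ((2:ℝ)^k)) • e + ((2:ℝ)^k) • (AWI W k n).mulVec e)
      ≤ 2 * ((wCoef W k n e * Real.sqrt ((2:ℝ)^k))^2 * qf (avgD W (k+1) (2*n+1)) e)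
        + 2 * (((2:ℝ)^k)^2 * qf (avgD W (k+1) (2*n+1)) ((AWI W k n).mulVec e)) := by
    have h := qf_le_par (avgD W (k+1) (2*n+1)) ((wCoef W k n e * Real.sqrt ((2:ℝ)^k)) • e)
      (((2:ℝ)^k) • (AWI W k n).mulVec e) (qf_avgD_nonneg hW (k+1) (2*n+1) _)
    rw [qf_smul_vec, qf_smul_vec] at h
    exact h
  have hle : ∫ x, qf (W x) (disHaar W k n e x) ≤ 22 := by
    rw [hkey]
    have hsum2 : qf (avgD W (k+1) (2*n))
        ((wCoef W k n e * -Real.sqrt ((2:ℝ)^k)) • e + ((2:ℝ)^k) • (AWI W k n).mulVec e)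
        + qf (avgD W (k+1) (2*n+1))
        ((wCoef W k n e * Real.sqrt ((2:ℝ)^k)) • e + ((2:ℝ)^k) • (AWI W k n).mulVec e)
        ≤ 4 * (2:ℝ)^k + 4 * ((2:ℝ)^k * ((2:ℝ)^k * qf (avgD W k n) ((AWI W k n).mulVec e))) := by
      have hstep := add_le_add hbm hbp
      have heq : 2 * ((wCoef W k n e * -Real.sqrt ((2:ℝ)^k))^2 * qf (avgD W (k+1) (2*n)) e)
          + 2 * (((2:ℝ)^k)^2 * qf (avgD W (k+1) (2*n)) ((AWI W k n).mulVec e))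
          + (2 * ((wCoef W k n e * Real.sqrt ((2:ℝ)^k))^2 * qf (avgD W (k+1) (2*n+1)) e)
          + 2 * (((2:ℝ)^k)^2 * qf (avgD W (k+1) (2*n+1)) ((AWI W k n).mulVec e)))
          = 2 * (wCoef W k n e ^ 2 * Real.sqrt ((2:ℝ)^k) ^ 2)
              * (qf (avgD W (k+1) (2*n)) e + qf (avgD W (k+1) (2*n+1)) e)
            + 2 * ((2:ℝ)^k)^2 * (qf (avgD W (k+1) (2*n)) ((AWI W k n).mulVec e)
              + qf (avgD W (k+1) (2*n+1)) ((AWI W k n).mulVec e)) := by ring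
      rw [heq, hpm, hpmA, hs2] at hstep
      calc _ ≤ 2 * (wCoef W k n e ^ 2 * (2:ℝ)^k) * (2 * qf (avgD W k n) e)
            + 2 * ((2:ℝ)^k)^2 * (2 * qf (avgD W k n) ((AWI W k n).mulVec e)) := hstep
        _ = 4 * (2:ℝ)^k * (wCoef W k n e ^ 2 * qf (avgD W k n) e)
            + 4 * ((2:ℝ)^k * ((2:ℝ)^k * qf (avgD W k n) ((AWI W k n).mulVec e))) := by ring
        _ = 4 * (2:ℝ)^k + 4 * ((2:ℝ)^k * ((2:ℝ)^k * qf (avgD W k n) ((AWI W k n).mulVec e))) := by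
            rw [hc2, mul_one]
    have h5 : (2:ℝ)^k * ((2:ℝ)^k * qf (avgD W k n) ((AWI W k n).mulVec e)) ≤ (2:ℝ)^k * 10 :=
      mul_le_mul_of_nonneg_left hT (two_zpow_pos k).le
    calc (2:ℝ)^(-(k+1)) * qf (avgD W (k+1) (2*n))
          ((wCoef W k n e * -Real.sqrt ((2:ℝ)^k)) • e + ((2:ℝ)^k) • (AWI W k n).mulVec e)
        + (2:ℝ)^(-(k+1)) * qf (avgD W (k+1) (2*n+1))
          ((wCoef W k n e * Real.sqrt ((2:ℝ)^k)) • e + ((2:ℝ)^k) • (AWI W k n).mulVec e)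
        = (2:ℝ)^(-(k+1)) * (qf (avgD W (k+1) (2*n))
            ((wCoef W k n e * -Real.sqrt ((2:ℝ)^k)) • e + ((2:ℝ)^k) • (AWI W k n).mulVec e)
          + qf (avgD W (k+1) (2*n+1))
            ((wCoef W k n e * Real.sqrt ((2:ℝ)^k)) • e + ((2:ℝ)^k) • (AWI W k n).mulVec e)) := by
          ring
      _ ≤ (2:ℝ)^(-(k+1)) * (4 * (2:ℝ)^k
            + 4 * ((2:ℝ)^k * ((2:ℝ)^k * qf (avgD W k n) ((AWI W k n).mulVec e)))) :=
          mul_le_mul_of_nonneg_left hsum2 (two_zpow_pos _).le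
      _ ≤ (2:ℝ)^(-(k+1)) * (4 * (2:ℝ)^k + 4 * ((2:ℝ)^k * 10)) := by
          refine mul_le_mul_of_nonneg_left ?_ (two_zpow_pos _).le
          linarith [h5]
      _ = 22 * ((2:ℝ)^(-(k+1)) * ((2:ℝ)^k * 2)) := by ring
      _ = 22 := by rw [h2t, mul_one]
  calc Real.sqrt (∫ x, qf (W x) (disHaar W k n e x))
      ≤ Real.sqrt 25 := Real.sqrt_le_sqrt (le_trans hle (by norm_num))
    _ = 5 := by
        rw [show (25:ℝ) = 5^2 by norm_num, Real.sqrt_sq (by norm_num : (0:ℝ) ≤ 5)]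

end
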